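/- There do not exist real numbers s, t, u with each in the open interval (0,1) and a monic polynomial b(x) with nonnegative real coefficients, b(0) = 1, such that (1 + s x + t x^2 + u x^3 + x^4) · b(x) has all coefficients in {0,1}. -/
import Mathlib


open Polynomial

lemma aux_coeff_X_pow_mul (k n : ℕ) (p : ℝ[X]) :
    (X ^ k * p).coeff n = if k ≤ n then p.coeff (n - k) else 0 := by
  rw [X_pow_mul, coeff_mul_X_pow']

theorem no_unfair_deg4 :
    ¬ ∃ (s t u : ℝ) (b : ℝ[X]), 0 < s ∧ s < 1 ∧ 0 < t ∧ t < 1 ∧ 0 < u ∧ u < 1 ∧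
      b.Monic ∧ b.coeff 0 = 1 ∧ (∀ n, 0 ≤ b.coeff n) ∧
      (∀ n, ((1 + C s * X + C t * X ^ 2 + C u * X ^ 3 + X ^ 4) * b).coeff n = 0 ∨
            ((1 + C s * X + C t * X ^ 2 + C u * X ^ 3 + X ^ 4) * b).coeff n = 1) := by
  rintro ⟨s, t, u, b, hs0, hs1, ht0, ht1, hu0, hu1, -, hb0, hbnn, hcoeff⟩
  have h1 : ((1 + C s * X + C t * X ^ 2 + C u * X ^ 3 + X ^ 4) * b).coeff 1 =
      b.coeff 1 + s * b.coeff 0 := by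
    simp [add_mul, coeff_C_mul, mul_assoc, coeff_X_mul, aux_coeff_X_pow_mul]
  have h4 : ((1 + C s * X + C t * X ^ 2 + C u * X ^ 3 + X ^ 4) * b).coeff 4 =
      b.coeff 4 + s * b.coeff 3 + t * b.coeff 2 + u * b.coeff 1 + b.coeff 0 := by
    simp [add_mul, coeff_C_mul, mul_assoc, coeff_X_mul, aux_coeff_X_pow_mul]
  have hc1 := hcoeff 1
  have hc4 := hcoeff 4
  rw [h1, hb0] at hc1
  rw [h4, hb0] at hc4
  have hb1 : b.coeff 1 = 1 - s := by
    rcases hc1 with h | h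
    · nlinarith [hbnn 1]
    · linarith
  rcases hc4 with h | h <;>
    nlinarith [hbnn 2, hbnn 3, hbnn 4, mul_pos hu0 (by linarith : (0:ℝ) < 1 - s),
      mul_nonneg hs0.le (hbnn 3), mul_nonneg ht0.le (hbnn 2)]
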